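/- Let a, b ∈ ℝ^m be unit vectors. Then the operator norm of a aᵀ − b bᵀ equals √(1 − (aᵀb)²). -/

import Mathlib

open Finset Matrix

private lemma expand_sum {m : ℕ} (a b x : Fin m → ℝ) (c1 c2 c3 : ℝ) :
    ∑ i, (c1 * x i + c2 * a i + c3 * b i) ^ 2
      = c1 ^ 2 * (∑ i, x i ^ 2) + c2 ^ 2 * (∑ i, a i ^ 2) + c3 ^ 2 * (∑ i, b i ^ 2)
        + 2 * c1 * c2 * (∑ i, a i * x i) + 2 * c1 * c3 * (∑ i, b i * x i)
        + 2 * c2 * c3 * (∑ i, a i * b i) := by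
  rw [Finset.mul_sum, Finset.mul_sum, Finset.mul_sum, Finset.mul_sum, Finset.mul_sum,
    Finset.mul_sum, ← Finset.sum_add_distrib, ← Finset.sum_add_distrib,
    ← Finset.sum_add_distrib, ← Finset.sum_add_distrib, ← Finset.sum_add_distrib]
  exact Finset.sum_congr rfl fun i _ => by ring

private lemma key_ineq {m : ℕ} (a b x : Fin m → ℝ)
    (ha : ∑ i, a i ^ 2 = 1) (hb : ∑ i, b i ^ 2 = 1) :
    (∑ i, a i * x i) ^ 2 + (∑ i, b i * x i) ^ 2
      - 2 * (∑ i, a i * b i) * (∑ i, a i * x i) * (∑ i, b i * x i)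
      ≤ (1 - (∑ i, a i * b i) ^ 2) * ∑ i, x i ^ 2 := by
  set t := ∑ i, a i * b i with hT
  set α := ∑ i, a i * x i with hA
  set β := ∑ i, b i * x i with hB
  set S := ∑ i, x i ^ 2 with hS
  have hS0 : 0 ≤ S := Finset.sum_nonneg fun i _ => sq_nonneg _
  have ht : t ^ 2 ≤ 1 := by
    have := Finset.sum_mul_sq_le_sq_mul_sq Finset.univ a b
    rw [ha, hb] at this
    simpa [hT] using this
  rcases eq_or_lt_of_le ht with h1 | h1
  · -- case t^2 = 1 : then b = t • a
    have hz : ∑ i, ((0:ℝ) * x i + (-t) * a i + 1 * b i) ^ 2 = 0 := by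
      rw [expand_sum a b x 0 (-t) 1, ha, hb, ← hT]
      ring_nf
      linarith [h1]
    have hba : ∀ i, b i = t * a i := by
      intro i
      have h2 := (Finset.sum_eq_zero_iff_of_nonneg
        (fun i _ => sq_nonneg _)).mp hz i (Finset.mem_univ i)
      have h3 : (0:ℝ) * x i + (-t) * a i + 1 * b i = 0 := by
        exact pow_eq_zero_iff two_ne_zero |>.mp h2
      nlinarith [h3]
    have hβ : β = t * α := by
      rw [hB, hA, Finset.mul_sum]
      exact Finset.sum_congr rfl fun i _ => by rw [hba i]; ring
    rw [hβ]
    nlinarith [sq_nonneg α]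
  · -- case t^2 < 1
    have h0 : (0:ℝ) ≤ ∑ i, ((1 - t^2) * x i + (-(α - t*β)) * a i + (-(β - t*α)) * b i) ^ 2 :=
      Finset.sum_nonneg fun i _ => sq_nonneg _
    rw [expand_sum a b x _ _ _, ha, hb, ← hT, ← hA, ← hB, ← hS] at h0
    nlinarith [h0, sq_nonneg (1 - t^2)]


private lemma mulVec_outer {m : ℕ} (a b : Fin m → ℝ) (x : Fin m → ℝ) (i : Fin m) :
    ((Matrix.vecMulVec a a - Matrix.vecMulVec b b) *ᵥ x) i
      = a i * (∑ j, a j * x j) - b i * (∑ j, b j * x j) := by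
  have h : ∀ j, (Matrix.vecMulVec a a - Matrix.vecMulVec b b) i j * x j
      = a i * (a j * x j) - b i * (b j * x j) := fun j => by
    simp [Matrix.vecMulVec_apply, Matrix.sub_apply]; ring
  simp only [Matrix.mulVec, dotProduct, h, Finset.sum_sub_distrib, ← Finset.mul_sum]

noncomputable def opNorm {m n : ℕ} (A : Matrix (Fin m) (Fin n) ℝ) : ℝ :=
  ‖LinearMap.toContinuousLinearMap (Matrix.toEuclideanLin (𝕜 := ℝ) A)‖

theorem outer_product_opNorm {m : ℕ} (a b : Fin m → ℝ)
    (ha : ∑ i, a i ^ 2 = 1) (hb : ∑ i, b i ^ 2 = 1) :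
    opNorm (Matrix.vecMulVec a a - Matrix.vecMulVec b b)
      = Real.sqrt (1 - (∑ i, a i * b i) ^ 2) := by
  set t := ∑ i, a i * b i with hT
  have ht : t ^ 2 ≤ 1 := by
    have := Finset.sum_mul_sq_le_sq_mul_sq Finset.univ a b
    rw [ha, hb] at this
    simpa [hT] using this
  have ht0 : (0:ℝ) ≤ 1 - t ^ 2 := by linarith
  set M := Matrix.vecMulVec a a - Matrix.vecMulVec b b with hM
  set T := LinearMap.toContinuousLinearMap (Matrix.toEuclideanLin (𝕜 := ℝ) M) with hTm
  -- squared norm of T x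
  have hTx : ∀ x : EuclideanSpace ℝ (Fin m), ‖T x‖ ^ 2
      = (∑ j, a j * x j) ^ 2 + (∑ j, b j * x j) ^ 2
        - 2 * t * (∑ j, a j * x j) * (∑ j, b j * x j) := by
    intro x
    have hcoord : ∀ i, (T x) i = a i * (∑ j, a j * x j) - b i * (∑ j, b j * x j) := by
      intro i
      have : (T x) i = (M *ᵥ (fun j => x j)) i := rfl
      rw [this, hM, mulVec_outer]
    have hn : ‖T x‖ = Real.sqrt (∑ i, ((T x) i) ^ 2) := by
      rw [EuclideanSpace.norm_eq]
      congr 1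
      exact Finset.sum_congr rfl fun i _ => by rw [Real.norm_eq_abs, sq_abs]
    rw [hn, Real.sq_sqrt (Finset.sum_nonneg fun i _ => sq_nonneg _)]
    have : ∑ i, ((T x) i) ^ 2
        = ∑ i, ((0:ℝ) * x i + (∑ j, a j * x j) * a i + (-(∑ j, b j * x j)) * b i) ^ 2 :=
      Finset.sum_congr rfl fun i _ => by rw [hcoord i]; ring
    rw [this, expand_sum a b x _ _ _, ha, hb, ← hT]
    ring
  have hxnorm : ∀ x : EuclideanSpace ℝ (Fin m), ‖x‖ ^ 2 = ∑ i, x i ^ 2 := by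
    intro x
    rw [EuclideanSpace.norm_eq, Real.sq_sqrt (Finset.sum_nonneg fun i _ => sq_nonneg _)]
    exact Finset.sum_congr rfl fun i _ => by rw [Real.norm_eq_abs, sq_abs]
  have hub : ∀ x : EuclideanSpace ℝ (Fin m), ‖T x‖ ≤ Real.sqrt (1 - t ^ 2) * ‖x‖ := by
    intro x
    have h1 : ‖T x‖ ^ 2 ≤ (1 - t ^ 2) * ‖x‖ ^ 2 := by
      rw [hTx x, hxnorm x]
      exact key_ineq a b (fun j => x j) ha hb
    have h2 : ‖T x‖ = Real.sqrt (‖T x‖ ^ 2) := (Real.sqrt_sq (norm_nonneg _)).symm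
    rw [h2]
    calc Real.sqrt (‖T x‖ ^ 2) ≤ Real.sqrt ((1 - t ^ 2) * ‖x‖ ^ 2) := Real.sqrt_le_sqrt h1
      _ = Real.sqrt (1 - t ^ 2) * ‖x‖ := by
          rw [Real.sqrt_mul ht0, Real.sqrt_sq (norm_nonneg _)]
  show ‖T‖ = Real.sqrt (1 - t ^ 2)
  refine le_antisymm (ContinuousLinearMap.opNorm_le_bound T (Real.sqrt_nonneg _) hub) ?_
  -- lower bound: attained at a + b or a - b
  have attain : ∀ c : ℝ, c = 1 ∨ c = -1 →
      ∀ x : EuclideanSpace ℝ (Fin m), (∀ i, x i = a i + c * b i) →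
      ‖T x‖ = Real.sqrt (1 - t ^ 2) * ‖x‖ := by
    intro c hc x hx
    have hα : ∑ j, a j * x j = 1 + c * t := by
      calc ∑ j, a j * x j = ∑ j, (a j ^ 2 + c * (a j * b j)) :=
            Finset.sum_congr rfl fun j _ => by rw [hx j]; ring
        _ = (∑ j, a j ^ 2) + c * (∑ j, a j * b j) := by
            rw [Finset.sum_add_distrib, Finset.mul_sum]
        _ = 1 + c * t := by rw [ha, ← hT]
    have hβ : ∑ j, b j * x j = t + c := by
      calc ∑ j, b j * x j = ∑ j, (a j * b j + c * b j ^ 2) :=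
            Finset.sum_congr rfl fun j _ => by rw [hx j]; ring
        _ = (∑ j, a j * b j) + c * (∑ j, b j ^ 2) := by
            rw [Finset.sum_add_distrib, Finset.mul_sum]
        _ = t + c := by rw [hb, ← hT]; ring
    have hxs : ‖x‖ ^ 2 = 2 + 2 * c * t := by
      rw [hxnorm x]
      calc ∑ i, x i ^ 2 = ∑ i, (a i ^ 2 + c ^ 2 * b i ^ 2 + 2 * c * (a i * b i)) :=
            Finset.sum_congr rfl fun i _ => by rw [hx i]; ring
        _ = (∑ i, a i ^ 2) + c ^ 2 * (∑ i, b i ^ 2) + 2 * c * (∑ i, a i * b i) := by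
            rw [Finset.sum_add_distrib, Finset.sum_add_distrib, Finset.mul_sum, Finset.mul_sum]
        _ = 2 + 2 * c * t := by
            rw [ha, hb, ← hT]; rcases hc with h | h <;> rw [h] <;> ring
    have hTxs : ‖T x‖ ^ 2 = (1 - t ^ 2) * ‖x‖ ^ 2 := by
      rw [hTx x, hα, hβ, hxs]
      rcases hc with h | h <;> rw [h] <;> ring
    have : ‖T x‖ = Real.sqrt ((1 - t ^ 2) * ‖x‖ ^ 2) := by
      rw [← hTxs, Real.sqrt_sq (norm_nonneg _)]
    rw [this, Real.sqrt_mul ht0, Real.sqrt_sq (norm_nonneg _)]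
  rcases le_or_gt 0 t with htpos | htneg
  · -- use x = a + b
    set x : EuclideanSpace ℝ (Fin m) := (WithLp.equiv 2 (Fin m → ℝ)).symm (a + b) with hxdef
    have hxc : ∀ i, x i = a i + 1 * b i := fun i => by
      rw [hxdef]; simp [WithLp.equiv_symm_apply, PiLp.toLp_apply]
    have heq := attain 1 (Or.inl rfl) x hxc
    have hxpos : 0 < ‖x‖ := by
      have h2 : ‖x‖ ^ 2 = 2 + 2 * t := by
        rw [hxnorm x]
        calc ∑ i, x i ^ 2 = ∑ i, (a i ^ 2 + b i ^ 2 + 2 * (a i * b i)) :=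
              Finset.sum_congr rfl fun i _ => by rw [hxc i]; ring
          _ = (∑ i, a i ^ 2) + (∑ i, b i ^ 2) + 2 * (∑ i, a i * b i) := by
              rw [Finset.sum_add_distrib, Finset.sum_add_distrib, Finset.mul_sum]
          _ = 2 + 2 * t := by rw [ha, hb, ← hT]; ring
      have : 0 < ‖x‖ ^ 2 := by rw [h2]; linarith
      nlinarith [norm_nonneg x, this]
    have := T.le_opNorm x
    rw [heq] at this
    exact le_of_mul_le_mul_right (by linarith [this]) hxpos
  · -- use x = a - b
    set x : EuclideanSpace ℝ (Fin m) := (WithLp.equiv 2 (Fin m → ℝ)).symm (a - b) with hxdef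
    have hxc : ∀ i, x i = a i + (-1) * b i := fun i => by
      rw [hxdef]; simp [WithLp.equiv_symm_apply, PiLp.toLp_apply]; ring
    have heq := attain (-1) (Or.inr rfl) x hxc
    have hxpos : 0 < ‖x‖ := by
      have h2 : ‖x‖ ^ 2 = 2 - 2 * t := by
        rw [hxnorm x]
        calc ∑ i, x i ^ 2 = ∑ i, (a i ^ 2 + b i ^ 2 - 2 * (a i * b i)) :=
              Finset.sum_congr rfl fun i _ => by rw [hxc i]; ring
          _ = (∑ i, a i ^ 2) + (∑ i, b i ^ 2) - 2 * (∑ i, a i * b i) := by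
              rw [Finset.sum_sub_distrib, Finset.sum_add_distrib, Finset.mul_sum]
          _ = 2 - 2 * t := by rw [ha, hb, ← hT]; ring
      have : 0 < ‖x‖ ^ 2 := by rw [h2]; linarith
      nlinarith [norm_nonneg x, this]
    have := T.le_opNorm x
    rw [heq] at this
    exact le_of_mul_le_mul_right (by linarith [this]) hxpos
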